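/- arXiv:2001.00785 — 2 statements merged into one kernel-verified Lean document; each statement's English description precedes it below -/
import Mathlib

section
/- The polynomial x³ − 14x² + 28x − 49 is irreducible over ℚ and its discriminant equals −191051, which is not a square of a rational number; consequently its Galois group over ℚ is the symmetric group S₃ (in particular, nonabelian), so its roots do not lie in any cyclotomic field. -/
open Polynomial

private noncomputable def qZ : ℤ[X] := X ^ 3 - 14 * X ^ 2 + 28 * X - 49

private lemma qZ_monic : qZ.Monic := by unfold qZ; monicity!

private lemma qZ_natDegree : qZ.natDegree = 3 := by unfold qZ; compute_degree!

private lemma qZ3_irr : Irreducible (qZ.map (Int.castRingHom (ZMod 3))) := by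
  rw [irreducible_iff_roots_eq_zero_of_degree_le_three]
  · rw [Multiset.eq_zero_iff_forall_notMem]
    intro r hr
    rw [mem_roots, IsRoot] at hr
    · revert hr
      simp only [qZ, eval_map, eval₂_sub, eval₂_add, eval₂_mul, eval₂_pow, eval₂_X, eval₂_ofNat]
      revert r
      decide
    · exact (qZ_monic.map _).ne_zero
  · rw [qZ_monic.natDegree_map, qZ_natDegree]; norm_num
  · rw [qZ_monic.natDegree_map, qZ_natDegree]

private lemma qZ_irr : Irreducible qZ :=
  qZ_monic.irreducible_of_irreducible_map _ _ qZ3_irr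

private lemma p_eq : (X ^ 3 - 14 * X ^ 2 + 28 * X - 49 : ℚ[X]) = qZ.map (algebraMap ℤ ℚ) := by
  simp [qZ]

private lemma p_irr : Irreducible (X ^ 3 - 14 * X ^ 2 + 28 * X - 49 : ℚ[X]) := by
  rw [p_eq, ← qZ_monic.irreducible_iff_irreducible_map_fraction_map]
  exact qZ_irr

private lemma p_monic : (X ^ 3 - 14 * X ^ 2 + 28 * X - 49 : ℚ[X]).Monic := by monicity!

private lemma p_natDegree : (X ^ 3 - 14 * X ^ 2 + 28 * X - 49 : ℚ[X]).natDegree = 3 := by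
  rw [p_eq, qZ_monic.natDegree_map, qZ_natDegree]

private lemma card_rootSet_C :
    Fintype.card ((X ^ 3 - 14 * X ^ 2 + 28 * X - 49 : ℚ[X]).rootSet ℂ) = 3 := by
  classical
  simp_rw [rootSet_def, Finset.coe_sort_coe, Fintype.card_coe]
  rw [Multiset.toFinset_card_of_nodup, ← Splits.natDegree_eq_card_roots (IsAlgClosed.splits _),
    natDegree_map, p_natDegree]
  exact nodup_roots ((separable_map (algebraMap ℚ ℂ)).mpr p_irr.separable)

private lemma mem_rootSet_real {x : ℝ}
    (h : x ∈ (X ^ 3 - 14 * X ^ 2 + 28 * X - 49 : ℚ[X]).rootSet ℝ) :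
    x^3 - 14*x^2 + 28*x - 49 = 0 := by
  have := (mem_rootSet.mp h).2
  simpa [sub_eq_zero, map_ofNat] using this

private lemma real_roots_eq :
    ∀ a b : ℝ, a^3-14*a^2+28*a-49 = 0 → b^3-14*b^2+28*b-49 = 0 → a = b := by
  intro a b ha hb
  have ha12 : 12 < a := by nlinarith [sq_nonneg (a-1)]
  have hb12 : 12 < b := by nlinarith [sq_nonneg (b-1)]
  rcases lt_trichotomy a b with h | h | h
  · exfalso
    nlinarith [mul_pos (sub_pos.2 ha12) (sub_pos.2 hb12),
      mul_pos (sub_pos.2 h) (mul_pos (sub_pos.2 ha12) (sub_pos.2 hb12)),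
      sq_nonneg (a+b-14), sq_nonneg (a-b)]
  · exact h
  · exfalso
    nlinarith [mul_pos (sub_pos.2 ha12) (sub_pos.2 hb12),
      mul_pos (sub_pos.2 h) (mul_pos (sub_pos.2 ha12) (sub_pos.2 hb12)),
      sq_nonneg (a+b-14), sq_nonneg (a-b)]

private lemma card_rootSet_R :
    Fintype.card ((X ^ 3 - 14 * X ^ 2 + 28 * X - 49 : ℚ[X]).rootSet ℝ) ≤ 1 := by
  refine Fintype.card_le_one_iff.2 fun a b => ?_
  exact Subtype.ext (real_roots_eq a.1 b.1 (mem_rootSet_real a.2) (mem_rootSet_real b.2))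

/-- `Equiv.permCongr` as a `MulEquiv`. -/
private def permCongrMulEquiv {α β : Type*} (e : α ≃ β) : Equiv.Perm α ≃* Equiv.Perm β :=
  { e.permCongr with
    map_mul' := fun p q => by
      ext x
      simp [Equiv.permCongr_apply, Equiv.Perm.mul_apply] }

private noncomputable def galEquivS3 :
    (X ^ 3 - 14 * X ^ 2 + 28 * X - 49 : ℚ[X]).Gal ≃* Equiv.Perm (Fin 3) := by
  haveI : Fact (((X ^ 3 - 14 * X ^ 2 + 28 * X - 49 : ℚ[X]).map (algebraMap ℚ ℂ)).Splits) :=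
    ⟨IsAlgClosed.splits _⟩
  have hb : Function.Bijective
      (Polynomial.Gal.galActionHom (X ^ 3 - 14 * X ^ 2 + 28 * X - 49 : ℚ[X]) ℂ) := by
    apply Polynomial.Gal.galActionHom_bijective_of_prime_degree' p_irr
    · rw [p_natDegree]; norm_num
    · rw [card_rootSet_C]; have := card_rootSet_R; omega
    · rw [card_rootSet_C]; omega
  exact (MulEquiv.ofBijective _ hb).trans
    (permCongrMulEquiv (Fintype.equivFinOfCardEq card_rootSet_C))

private lemma not_cyclo : ∀ (n : ℕ) (x : ℂ), 0 < n →
    aeval x (X ^ 3 - 14 * X ^ 2 + 28 * X - 49 : ℚ[X]) = 0 →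
    x ∉ Algebra.adjoin ℚ {z : ℂ | z ^ n = 1} := by
  intro n x hn hx hmem
  set p : ℚ[X] := X ^ 3 - 14 * X ^ 2 + 28 * X - 49 with hp
  lift n to ℕ+ using hn with N
  set K := CyclotomicField N ℚ
  have hsc : Splits ((cyclotomic N ℚ).map (algebraMap ℚ ℂ)) := IsAlgClosed.splits _
  haveI : IsCyclotomicExtension {(N:ℕ)} ℚ K :=
    haveI : NeZero ((N:ℕ):ℚ) := ⟨by exact_mod_cast N.ne_zero⟩
    CyclotomicField.isCyclotomicExtension (N:ℕ) ℚ
  letI := IsCyclotomicExtension.splitting_field_cyclotomic N ℚ K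
  let φ : K →ₐ[ℚ] ℂ := IsSplittingField.lift K (cyclotomic N ℚ) hsc
  have hζ := IsCyclotomicExtension.zeta_spec N ℚ K
  have hζ' : IsPrimitiveRoot (φ (IsCyclotomicExtension.zeta N ℚ K)) N :=
    hζ.map_of_injective φ.toRingHom.injective
  have hsub : Algebra.adjoin ℚ {z : ℂ | z ^ (N:ℕ) = 1} ≤ φ.range := by
    apply Algebra.adjoin_le
    intro z hz
    obtain ⟨i, -, hi⟩ := hζ'.eq_pow_of_pow_eq_one hz
    exact ⟨IsCyclotomicExtension.zeta N ℚ K ^ i, by rw [map_pow]; exact hi⟩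
  obtain ⟨y, hy⟩ := hsub hmem
  have hy' : φ y = x := hy
  have hyp : aeval y p = 0 := by
    apply φ.toRingHom.injective
    show φ (aeval y p) = φ 0
    rw [map_zero, ← aeval_algHom_apply, hy', hx]
  have hmin : minpoly ℚ y = p := (minpoly.eq_of_irreducible_of_monic p_irr hyp p_monic).symm
  haveI := IsCyclotomicExtension.isGalois {(N:ℕ)} ℚ K
  have hsplits : (p.map (algebraMap ℚ K)).Splits := by
    rw [← hmin]; exact Normal.splits inferInstance y
  haveI : Fact ((p.map (algebraMap ℚ K)).Splits) := ⟨hsplits⟩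
  have hsurj := Polynomial.Gal.restrict_surjective p K
  letI : CommGroup (K ≃ₐ[ℚ] K) :=
    { (inferInstance : Group (K ≃ₐ[ℚ] K)) with
      mul_comm := (IsCyclotomicExtension.isMulCommutative {(N:ℕ)} ℚ K).is_comm.comm }
  have hcomm : ∀ a b : p.Gal, a * b = b * a := by
    intro a b
    obtain ⟨a', rfl⟩ := hsurj a
    obtain ⟨b', rfl⟩ := hsurj b
    rw [← map_mul, ← map_mul, mul_comm a' b']
  have : Equiv.swap (0:Fin 3) 1 * Equiv.swap 0 2 = Equiv.swap 0 2 * Equiv.swap (0:Fin 3) 1 := by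
    have := hcomm (galEquivS3.symm (Equiv.swap 0 1)) (galEquivS3.symm (Equiv.swap 0 2))
    have h2 := congrArg galEquivS3 this
    simpa [map_mul] using h2
  exact absurd this (by decide)

theorem stmt_2 :
    Irreducible (X ^ 3 - 14 * X ^ 2 + 28 * X - 49 : ℚ[X]) ∧
    (18 * (-14) * 28 * (-49) - 4 * (-14) ^ 3 * (-49) + (-14) ^ 2 * 28 ^ 2
        - 4 * 28 ^ 3 - 27 * (-49) ^ 2 : ℚ) = -191051 ∧
    ¬ IsSquare (-191051 : ℚ) ∧
    Nonempty ((X ^ 3 - 14 * X ^ 2 + 28 * X - 49 : ℚ[X]).Gal ≃* Equiv.Perm (Fin 3)) ∧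
    ∀ (n : ℕ) (x : ℂ), 0 < n →
      aeval x (X ^ 3 - 14 * X ^ 2 + 28 * X - 49 : ℚ[X]) = 0 →
      x ∉ Algebra.adjoin ℚ {z : ℂ | z ^ n = 1} := by
  refine ⟨p_irr, by norm_num, ?_, ⟨galEquivS3⟩, not_cyclo⟩
  rintro ⟨r, hr⟩
  nlinarith [mul_self_nonneg r]
end

section
/- The polynomial x³ − 54x² + 405x − 729 is irreducible over ℚ and its discriminant equals 26040609 = 5103²; consequently its Galois group over ℚ is cyclic of order 3. -/
open Polynomial

private lemma irr_mod2 : Irreducible (X^3 + X + 1 : (ZMod 2)[X]) := by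
  have hdeg : (X^3 + X + 1 : (ZMod 2)[X]).natDegree = 3 := by compute_degree!
  rw [irreducible_iff_roots_eq_zero_of_degree_le_three (by omega) (by omega)]
  rw [Multiset.eq_zero_iff_forall_notMem]
  intro x hx
  have h0 : (X^3 + X + 1 : (ZMod 2)[X]) ≠ 0 := by
    intro h; rw [h] at hdeg; simp at hdeg
  rw [mem_roots h0] at hx
  have := hx
  have key : x ^ 3 + x + 1 = 0 := by simpa [IsRoot] using this
  fin_cases x <;> revert key <;> decide

private lemma c54 : (54 : (ZMod 2)[X]) = 0 := by
  rw [← map_ofNat (C : ZMod 2 →+* (ZMod 2)[X]) 54, show (54 : ZMod 2) = 0 by decide, map_zero]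
private lemma c405 : (405 : (ZMod 2)[X]) = 1 := by
  rw [← map_ofNat (C : ZMod 2 →+* (ZMod 2)[X]) 405, show (405 : ZMod 2) = 1 by decide, map_one]
private lemma c729 : (729 : (ZMod 2)[X]) = 1 := by
  rw [← map_ofNat (C : ZMod 2 →+* (ZMod 2)[X]) 729, show (729 : ZMod 2) = 1 by decide, map_one]
private lemma c6 : (6 : (ZMod 2)[X]) = 0 := by
  rw [← map_ofNat (C : ZMod 2 →+* (ZMod 2)[X]) 6, show (6 : ZMod 2) = 0 by decide, map_zero]
private lemma c5 : (5 : (ZMod 2)[X]) = 1 := by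
  rw [← map_ofNat (C : ZMod 2 →+* (ZMod 2)[X]) 5, show (5 : ZMod 2) = 1 by decide, map_one]
private lemma cm1 : (-1 : (ZMod 2)[X]) = 1 := by
  rw [← map_one (C : ZMod 2 →+* (ZMod 2)[X]), ← map_neg, show (-1 : ZMod 2) = 1 by decide]

private lemma irrZ_p : Irreducible (X ^ 3 - 54 * X ^ 2 + 405 * X - 729 : ℤ[X]) := by
  have hm : (X ^ 3 - 54 * X ^ 2 + 405 * X - 729 : ℤ[X]).Monic := by monicity!
  apply hm.irreducible_of_irreducible_map (Int.castRingHom (ZMod 2))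
  have : (X ^ 3 - 54 * X ^ 2 + 405 * X - 729 : ℤ[X]).map (Int.castRingHom (ZMod 2))
      = X^3 + X + 1 := by
    simp only [Polynomial.map_sub, Polynomial.map_add, Polynomial.map_mul, Polynomial.map_pow,
      Polynomial.map_X, Polynomial.map_ofNat]
    rw [c54, c405, c729]
    linear_combination cm1
  rw [this]; exact irr_mod2

private lemma irrZ_q : Irreducible (X ^ 3 - 6 * X ^ 2 + 5 * X - 1 : ℤ[X]) := by
  have hm : (X ^ 3 - 6 * X ^ 2 + 5 * X - 1 : ℤ[X]).Monic := by monicity!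
  apply hm.irreducible_of_irreducible_map (Int.castRingHom (ZMod 2))
  have : (X ^ 3 - 6 * X ^ 2 + 5 * X - 1 : ℤ[X]).map (Int.castRingHom (ZMod 2))
      = X^3 + X + 1 := by
    simp only [Polynomial.map_sub, Polynomial.map_add, Polynomial.map_mul, Polynomial.map_pow,
      Polynomial.map_X, Polynomial.map_ofNat, Polynomial.map_one]
    rw [c6, c5]
    linear_combination cm1
  rw [this]; exact irr_mod2

private lemma mapZQ_p : (X ^ 3 - 54 * X ^ 2 + 405 * X - 729 : ℤ[X]).map (algebraMap ℤ ℚ)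
    = X ^ 3 - 54 * X ^ 2 + 405 * X - 729 := by
  simp only [Polynomial.map_sub, Polynomial.map_add, Polynomial.map_mul, Polynomial.map_pow,
    Polynomial.map_X, Polynomial.map_ofNat]

private lemma mapZQ_q : (X ^ 3 - 6 * X ^ 2 + 5 * X - 1 : ℤ[X]).map (algebraMap ℤ ℚ)
    = X ^ 3 - 6 * X ^ 2 + 5 * X - 1 := by
  simp only [Polynomial.map_sub, Polynomial.map_add, Polynomial.map_mul, Polynomial.map_pow,
    Polynomial.map_X, Polynomial.map_ofNat, Polynomial.map_one]

private lemma irrQ_p : Irreducible (X ^ 3 - 54 * X ^ 2 + 405 * X - 729 : ℚ[X]) := by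
  have hm : (X ^ 3 - 54 * X ^ 2 + 405 * X - 729 : ℤ[X]).Monic := by monicity!
  have := (hm.irreducible_iff_irreducible_map_fraction_map (K := ℚ)).mp irrZ_p
  rwa [mapZQ_p] at this

private lemma irrQ_q : Irreducible (X ^ 3 - 6 * X ^ 2 + 5 * X - 1 : ℚ[X]) := by
  have hm : (X ^ 3 - 6 * X ^ 2 + 5 * X - 1 : ℤ[X]).Monic := by monicity!
  have := (hm.irreducible_iff_irreducible_map_fraction_map (K := ℚ)).mp irrZ_q
  rwa [mapZQ_q] at this

noncomputable section

private def qpoly : ℚ[X] := X ^ 3 - 6 * X ^ 2 + 5 * X - 1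

private instance : Fact (Irreducible qpoly) := ⟨irrQ_q⟩

private abbrev Kf : Type := AdjoinRoot qpoly

private lemma qdeg : qpoly.natDegree = 3 := by unfold qpoly; compute_degree!

private lemma finrank_Kf : Module.finrank ℚ Kf = 3 := by
  rw [(AdjoinRoot.powerBasis (K := ℚ) (f := qpoly) (Fact.out : Irreducible qpoly).ne_zero).finrank,
    AdjoinRoot.powerBasis_dim]
  exact qdeg

private lemma splits_in_Kf :
    ((X ^ 3 - 54 * X ^ 2 + 405 * X - 729 : ℚ[X]).map (algebraMap ℚ Kf)).Splits := by
  set y : Kf := AdjoinRoot.root qpoly with hydef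
  have hy0 : qpoly.eval₂ (AdjoinRoot.of qpoly) y = 0 := AdjoinRoot.eval₂_root qpoly
  have hy : y ^ 3 = 6 * y ^ 2 - 5 * y + 1 := by
    have : y ^ 3 - 6 * y ^ 2 + 5 * y - 1 = 0 := by
      have h : (X ^ 3 - 6 * X ^ 2 + 5 * X - 1 : ℚ[X]).eval₂ (AdjoinRoot.of qpoly) y = 0 := hy0
      simpa [eval₂_sub, eval₂_add, eval₂_mul, eval₂_pow, map_ofNat] using h
    linear_combination this
  set a : Kf := 9 * y with hadef
  set b : Kf := -27 * y^2 + 144 * y - 36 with hbdef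
  set c : Kf := 27 * y^2 - 153 * y + 90 with hcdef
  have h1 : a + b + c = 54 := by rw [hadef, hbdef, hcdef]; ring
  have h2 : a * b + (a + b) * c = 405 := by
    rw [hadef, hbdef, hcdef]
    linear_combination (3645 - 729 * y) * hy
  have h3 : a * b * c = 729 := by
    rw [hadef, hbdef, hcdef]
    linear_combination (729 + 32805 * y - 6561 * y^2) * hy
  have hfac : (X ^ 3 - 54 * X ^ 2 + 405 * X - 729 : ℚ[X]).map (algebraMap ℚ Kf)
      = (X - C a) * (X - C b) * (X - C c) := by
    have e : (X - C a) * (X - C b) * (X - C c)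
        = X ^ 3 - C (a + b + c) * X ^ 2 + C (a * b + (a + b) * c) * X - C (a * b * c) := by
      simp only [map_add, map_mul]
      ring
    rw [e, h1, h2, h3]
    simp only [Polynomial.map_sub, Polynomial.map_add, Polynomial.map_mul, Polynomial.map_pow,
      Polynomial.map_X, Polynomial.map_ofNat, map_ofNat]
  rw [hfac]
  exact Splits.mul (Splits.mul (Splits.X_sub_C _) (Splits.X_sub_C _)) (Splits.X_sub_C _)

private lemma card_gal :
    Nat.card (X ^ 3 - 54 * X ^ 2 + 405 * X - 729 : ℚ[X]).Gal = 3 := by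
  have hdeg : (X ^ 3 - 54 * X ^ 2 + 405 * X - 729 : ℚ[X]).natDegree = 3 := by compute_degree!
  have h3dvd : 3 ∣ Fintype.card (X ^ 3 - 54 * X ^ 2 + 405 * X - 729 : ℚ[X]).Gal := by
    have := Polynomial.Gal.prime_degree_dvd_card irrQ_p (by rw [hdeg]; norm_num)
    rwa [hdeg, Nat.card_eq_fintype_card] at this
  haveI : FiniteDimensional ℚ Kf := (AdjoinRoot.powerBasis (K := ℚ) irrQ_q.ne_zero).finite
  have hle : Fintype.card (X ^ 3 - 54 * X ^ 2 + 405 * X - 729 : ℚ[X]).Gal ≤ 3 := by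
    rw [← Nat.card_eq_fintype_card, Polynomial.Gal.card_of_separable irrQ_p.separable]
    calc Module.finrank ℚ (X ^ 3 - 54 * X ^ 2 + 405 * X - 729 : ℚ[X]).SplittingField
        ≤ Module.finrank ℚ Kf := LinearMap.finrank_le_finrank_of_injective
          (f := (SplittingField.lift _ splits_in_Kf).toLinearMap)
          (SplittingField.lift _ splits_in_Kf).toRingHom.injective
      _ = 3 := finrank_Kf
  rw [Nat.card_eq_fintype_card]
  have hge := Nat.le_of_dvd Fintype.card_pos h3dvd
  omega

theorem stmt_3 :
    Irreducible (X ^ 3 - 54 * X ^ 2 + 405 * X - 729 : ℚ[X]) ∧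
    (18 * (-54) * 405 * (-729) - 4 * (-54) ^ 3 * (-729) + (-54) ^ 2 * 405 ^ 2
        - 4 * 405 ^ 3 - 27 * (-729) ^ 2 : ℚ) = 26040609 ∧
    (26040609 : ℚ) = 5103 ^ 2 ∧
    IsCyclic (X ^ 3 - 54 * X ^ 2 + 405 * X - 729 : ℚ[X]).Gal ∧
    Nat.card (X ^ 3 - 54 * X ^ 2 + 405 * X - 729 : ℚ[X]).Gal = 3 := by
  refine ⟨irrQ_p, by norm_num, by norm_num, ?_, card_gal⟩
  haveI : Fact (Nat.Prime 3) := ⟨by norm_num⟩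
  exact isCyclic_of_prime_card card_gal

end
end
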